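/- Let κ be a strongly inaccessible cardinal and let A ⊆ κ be a set of infinite regular cardinals that is unbounded in κ but nonstationary in κ. Then κ ∉ pcf(A): for every ultrafilter D on A, cf(∏A/D) ≠ κ. -/

import Mathlib

universe u

open Cardinal Set

namespace TukeySpec

/-- A subset `S` of a preorder is cofinal if every element has an upper bound in `S`. -/
def IsCofinal {P : Type*} [Preorder P] (S : Set P) : Prop :=
  ∀ p : P, ∃ s ∈ S, p ≤ s

/-- `Q` is a Tukey quotient of `P` (i.e. `P ≥_T Q`): there is a map `P → Q`
sending cofinal sets to cofinal sets. -/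
def TukeyQuot (P : Type*) (Q : Type*) [Preorder P] [Preorder Q] : Prop :=
  ∃ φ : P → Q, ∀ S : Set P, IsCofinal S → IsCofinal (φ '' S)

/-- `P` has calibre `(κ, l, m)`. -/
def Calibre (P : Type u) [Preorder P] (κ l m : Cardinal.{u}) : Prop :=
  ∀ P' : Set P, #P' = κ → ∃ R ⊆ P', #R = l ∧ ∀ B ⊆ R, #B = m → BddAbove B

/-- `P` has calibre `κ` (the simplified form): every `κ`-sized subset has a
`κ`-sized subset which is bounded in `P`. -/
def CalibreSimple (P : Type u) [Preorder P] (κ : Cardinal.{u}) : Prop :=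
  ∀ P' : Set P, #P' = κ → ∃ R ⊆ P', #R = κ ∧ BddAbove R

/-- The Tukey spectrum of a poset: all regular cardinals `κ` with `P ≥_T κ`,
where `κ` carries its usual (ordinal) ordering. -/
def specPoset (P : Type u) [Preorder P] : Set Cardinal.{u} :=
  {κ | κ.IsRegular ∧ TukeyQuot P ↥(Set.Iio κ.ord)}

/-- The product `∏A` of a set of cardinals: all functions on `A` with
`f a < a` (as ordinals). -/
def piSet (A : Set Cardinal.{0}) : Set (↥A → Ordinal.{0}) :=
  {f | ∀ a : ↥A, f a < (a : Cardinal).ord}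

/-- A family of members of `∏A` is bounded if it has an upper bound in `(∏A, ≤)`
(pointwise order). -/
def BddIn (A : Set Cardinal.{0}) (S : Set (↥A → Ordinal.{0})) : Prop :=
  ∃ h ∈ piSet A, ∀ f ∈ S, ∀ a : ↥A, f a ≤ h a

/-- The Tukey spectrum of a set `A` of regular cardinals: all regular `κ` for which
there is a `κ`-sized family `F ⊆ ∏A` all of whose `κ`-sized subfamilies are
unbounded in `(∏A, ≤)`. -/
def spec (A : Set Cardinal.{0}) : Set Cardinal.{0} :=
  {κ | κ.IsRegular ∧ ∃ F ⊆ piSet A, #F = Cardinal.lift.{1} κ ∧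
    ∀ F₀ ⊆ F, #F₀ = Cardinal.lift.{1} κ → ¬ BddIn A F₀}

/-- `cf(∏A/D)`: the least cardinality of a subset of `∏A` which is cofinal
modulo the ultrafilter `D`. -/
noncomputable def cofUlt (A : Set Cardinal.{0}) (D : Ultrafilter ↥A) : Cardinal.{1} :=
  sInf {c : Cardinal.{1} | ∃ S ⊆ piSet A, #S = c ∧
    ∀ f ∈ piSet A, ∃ g ∈ S, {a : ↥A | f a ≤ g a} ∈ D}

/-- `pcf(A)`: the set of all cofinalities `cf(∏A/D)` as `D` ranges over
ultrafilters on `A`. -/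
def pcf (A : Set Cardinal.{0}) : Set Cardinal.{0} :=
  {κ | ∃ D : Ultrafilter ↥A, Cardinal.lift.{1} κ = cofUlt A D}

/-- `ub(F)`: the set of coordinates `a ∈ A` where the family `F` is unbounded. -/
def ub (A : Set Cardinal.{0}) (F : Set (↥A → Ordinal.{0})) : Set ↥A :=
  {a | ∀ β < (a : Cardinal).ord, ∃ f ∈ F, β < f a}

/-- The strong part of the Tukey spectrum: `l ∈ spec*(A)` iff there is an
`l`-sized family `F ⊆ ∏A` such that every `l`-sized subfamily has a set of
unbounded coordinates which is unbounded in `sup A`. -/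
def specStarMem (A : Set Cardinal.{0}) (l : Cardinal.{0}) : Prop :=
  l.IsRegular ∧ ∃ F ⊆ piSet A, #F = Cardinal.lift.{1} l ∧
    ∀ F₀ ⊆ F, #F₀ = Cardinal.lift.{1} l →
      ∀ β < sSup A, ∃ a ∈ ub A F₀, β < (a : Cardinal)

/-- `κ` is a limit point of the set `X` of cardinals. -/
def IsLimitPt (X : Set Cardinal.{0}) (κ : Cardinal.{0}) : Prop :=
  ∀ β < κ, ∃ x ∈ X, β < x ∧ x < κ

/-- `C` is a closed unbounded subset of `κ`. -/
def IsClubIn (C : Set Ordinal.{0}) (κ : Ordinal.{0}) : Prop :=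
  C ⊆ Set.Iio κ ∧ (∀ β < κ, ∃ o ∈ C, β < o) ∧
    ∀ β < κ, β ≠ 0 → (∀ γ < β, ∃ o ∈ C, γ < o ∧ o < β) → β ∈ C

/-- A set `S` of cardinals is stationary in `κ`: it meets every club of `κ`. -/
def StatIn (S : Set Cardinal.{0}) (κ : Cardinal.{0}) : Prop :=
  ∀ C : Set Ordinal.{0}, IsClubIn C κ.ord → ∃ a ∈ S, a.ord ∈ C

/-- `κ` is Mahlo: strongly inaccessible and the regular cardinals below `κ`
are stationary in `κ`. -/
def IsMahlo (κ : Cardinal.{0}) : Prop :=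
  κ.IsInaccessible ∧ StatIn {a | a < κ ∧ a.IsRegular} κ

/-- `κ` is weakly compact: strongly inaccessible and `κ → (κ)²₂`. -/
def IsWeaklyCompact (κ : Cardinal.{0}) : Prop :=
  κ.IsInaccessible ∧
    ∀ c : Ordinal.{0} → Ordinal.{0} → Bool,
      ∃ H ⊆ Set.Iio κ.ord, #H = Cardinal.lift.{1} κ ∧
        ∃ b : Bool, ∀ α ∈ H, ∀ β ∈ H, α < β → c α β = b

/-- `θ` carries a Jónsson algebra: there is `F` from finite subsets of `θ` to `θ`
such that `F` applied to finite subsets of any `θ`-sized `H ⊆ θ` covers `θ`. -/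
def CarriesJonsson (θ : Cardinal.{0}) : Prop :=
  ∃ F : Finset Ordinal.{0} → Ordinal.{0},
    (∀ s : Finset Ordinal.{0}, (↑s : Set Ordinal) ⊆ Set.Iio θ.ord → F s < θ.ord) ∧
    ∀ H ⊆ Set.Iio θ.ord, #H = Cardinal.lift.{1} θ →
      ∀ γ < θ.ord, ∃ s : Finset Ordinal.{0}, (↑s : Set Ordinal) ⊆ H ∧ F s = γ

/-- `cf(∏A/J_bd)`: the least cardinality of a subset of `∏A` cofinal modulo
the ideal of bounded subsets of `A`. -/
noncomputable def cofJbd (A : Set Cardinal.{0}) : Cardinal.{1} :=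
  sInf {c : Cardinal.{1} | ∃ S ⊆ piSet A, #S = c ∧
    ∀ f ∈ piSet A, ∃ g ∈ S, ∃ b < sSup A, ∀ a : ↥A, b < (a : Cardinal) → f a ≤ g a}

/-- `μ` is a limit cardinal. -/
def IsLimitCard (μ : Cardinal.{0}) : Prop :=
  ℵ₀ ≤ μ ∧ ∀ ν < μ, Order.succ ν < μ

/-- If `κ` is strongly inaccessible and `A ⊆ κ` is an unbounded,
nonstationary set of infinite regular cardinals, then `κ ∉ pcf(A)`. -/
theorem statement14 (κ : Cardinal.{0}) (hinacc : κ.IsInaccessible)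
    (A : Set Cardinal.{0}) (hA : ∀ a ∈ A, a.IsRegular) (hsub : ∀ a ∈ A, a < κ)
    (hunb : ∀ β < κ, ∃ a ∈ A, β < a) (hns : ¬ StatIn A κ) :
    κ ∉ pcf A := by
  rintro ⟨D, hD⟩
  obtain ⟨C, hCclub, hCA⟩ : ∃ C, IsClubIn C κ.ord ∧ ∀ a ∈ A, a.ord ∉ C := by
    by_contra h
    exact hns fun C hC => by
      by_contra h2; push_neg at h2; exact h ⟨C, hC, h2⟩
  obtain ⟨hκℵ, hκreg, hκsl⟩ := hinacc
  -- the defining set of `cofUlt` is nonempty, hence the infimum is attained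
  have hPne : {c : Cardinal.{1} | ∃ S ⊆ piSet A, #S = c ∧
      ∀ f ∈ piSet A, ∃ g ∈ S, {a : ↥A | f a ≤ g a} ∈ D}.Nonempty := by
    refine ⟨#(piSet A), piSet A, subset_rfl, rfl, fun f hf => ⟨f, hf, ?_⟩⟩
    have : {a : ↥A | f a ≤ f a} = Set.univ := by ext a; simp
    rw [this]; exact Filter.univ_mem
  have hmem := csInf_mem hPne
  rw [show sInf _ = cofUlt A D from rfl, ← hD] at hmem
  obtain ⟨S, hSsub, hScard, hScof⟩ := hmem
  by_cases hbd : ∃ μ < κ, {a : ↥A | (a : Cardinal) ≤ μ} ∈ D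
  · -- Case 1: D concentrates on a bounded set; cofinality is small
    obtain ⟨μ, hμκ, hμD⟩ := hbd
    have hμℵ : ℵ₀ ≤ μ := by
      obtain ⟨a, ha⟩ := Ultrafilter.nonempty_of_mem hμD
      exact le_trans (hA a a.2).aleph0_le ha
    set T : Set (↥A → Ordinal.{0}) :=
      {g | g ∈ piSet A ∧ ∀ a : ↥A, μ < (a : Cardinal) → g a = 0} with hT
    have hTP : #T ∈ {c : Cardinal.{1} | ∃ S ⊆ piSet A, #S = c ∧
        ∀ f ∈ piSet A, ∃ g ∈ S, {a : ↥A | f a ≤ g a} ∈ D} := by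
      refine ⟨T, fun g hg => hg.1, rfl, fun f hf => ?_⟩
      refine ⟨fun a => if (a : Cardinal) ≤ μ then f a else 0, ⟨fun a => ?_, fun a ha => ?_⟩, ?_⟩
      · by_cases h : (a : Cardinal) ≤ μ
        · simpa [h] using hf a
        · simpa [h] using (hA a a.2).ord_pos
      · simp [not_le.2 ha]
      · refine Filter.mem_of_superset hμD fun a ha => ?_
        simp only [Set.mem_setOf_eq] at ha ⊢
        simp [ha]
    have hle : Cardinal.lift.{1} κ ≤ #T := hD ▸ csInf_le' hTP
    -- bound the size of T
    have hTbound : #T ≤ Cardinal.lift.{1} (2 ^ (Order.succ μ)) := by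
      have hinj : Function.Injective
          (fun (g : T) => fun (b : {a : ↥A // (a : Cardinal) ≤ μ}) =>
            (⟨g.1 b.1, Set.mem_Iio.mpr (lt_of_lt_of_le (g.2.1 b.1) (Cardinal.ord_le_ord.2 b.2))⟩ :
              ↥(Set.Iio μ.ord))) := by
        rintro ⟨g, hg⟩ ⟨g', hg'⟩ h
        ext a
        show g a = g' a
        by_cases hμa : (a : Cardinal) ≤ μ
        · have := congrFun h ⟨a, hμa⟩
          simpa using congrArg Subtype.val this
        · rw [hg.2 a (not_le.1 hμa), hg'.2 a (not_le.1 hμa)]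
      have h1 : #T ≤ #({a : ↥A // (a : Cardinal) ≤ μ} → ↥(Set.Iio μ.ord)) :=
        Cardinal.mk_le_of_injective hinj
      have hIio : #(↥(Set.Iio μ.ord)) = Cardinal.lift.{1} μ := by
        rw [Ordinal.mk_Iio_ordinal, Cardinal.card_ord]
      have hBle : #{a : ↥A // (a : Cardinal) ≤ μ} ≤ Cardinal.lift.{1} (Order.succ μ) := by
        have hinjB : Function.Injective
            (fun (b : {a : ↥A // (a : Cardinal) ≤ μ}) =>
              (⟨(b.1 : Cardinal).ord, Cardinal.ord_lt_ord.2 (lt_of_le_of_lt b.2 (Order.lt_succ μ))⟩ :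
                ↥(Set.Iio (Order.succ μ).ord))) := by
          rintro ⟨⟨a, ha⟩, h1⟩ ⟨⟨a', ha'⟩, h2⟩ h
          have := congrArg Subtype.val h
          simp only at this
          have := Cardinal.ord_injective this
          simp_all
        calc #{a : ↥A // (a : Cardinal) ≤ μ} ≤ #(↥(Set.Iio (Order.succ μ).ord)) :=
              Cardinal.mk_le_of_injective hinjB
          _ = Cardinal.lift.{1} (Order.succ μ) := by
              rw [Ordinal.mk_Iio_ordinal, Cardinal.card_ord]
      calc #T ≤ #({a : ↥A // (a : Cardinal) ≤ μ} → ↥(Set.Iio μ.ord)) := h1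
        _ = #(↥(Set.Iio μ.ord)) ^ #{a : ↥A // (a : Cardinal) ≤ μ} :=
            (Cardinal.power_def _ _).symm
        _ ≤ Cardinal.lift.{1} μ ^ Cardinal.lift.{1} (Order.succ μ) := by
            rw [hIio]
            exact Cardinal.power_le_power_left
              (by simp only [ne_eq, Cardinal.lift_eq_zero]; exact (Cardinal.aleph0_pos.trans_le hμℵ).ne') hBle
        _ = Cardinal.lift.{1} (μ ^ Order.succ μ) := by rw [Cardinal.lift_power]
        _ ≤ Cardinal.lift.{1} (2 ^ (Order.succ μ)) := by
            rw [Cardinal.lift_le]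
            calc μ ^ Order.succ μ ≤ (2 ^ μ) ^ Order.succ μ :=
                  Cardinal.power_le_power_right (Cardinal.cantor μ).le
              _ = 2 ^ (μ * Order.succ μ) := by rw [← Cardinal.power_mul]
              _ = 2 ^ (Order.succ μ) := by
                  rw [Cardinal.mul_eq_right (le_trans hμℵ (Order.le_succ μ))
                    (Order.le_succ μ) ((Cardinal.aleph0_pos.trans_le hμℵ).ne')]
    have hlt : (2 : Cardinal.{0}) ^ (Order.succ μ) < κ :=
      hκsl (hκsl.isSuccPrelimit.succ_lt hμκ)
    exact absurd (hle.trans hTbound) (not_le.2 (Cardinal.lift_lt.2 hlt))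
  · -- Case 2: D contains all cobounded sets
    push_neg at hbd
    have hub : ∀ μ < κ, {a : ↥A | μ < (a : Cardinal)} ∈ D := by
      intro μ hμ
      have := (Ultrafilter.compl_mem_iff_notMem).2 (hbd μ hμ)
      convert this using 1
      ext a; simp [not_le]
    -- sup of the club below each element of A
    set c : ↥A → Ordinal.{0} := fun a => sSup (C ∩ Set.Iio (a : Cardinal).ord) with hc
    have hbdd : ∀ a : ↥A, BddAbove (C ∩ Set.Iio (a : Cardinal).ord) :=
      fun a => ⟨κ.ord, fun o ho => (hCclub.1 ho.1).le⟩
    have hc_lt : ∀ a : ↥A, c a < (a : Cardinal).ord := by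
      intro a
      rcases (C ∩ Set.Iio (a : Cardinal).ord).eq_empty_or_nonempty with he | hne
      · rw [hc]; simp only [he, csSup_empty]
        exact (hA a a.2).ord_pos
      · have hle : c a ≤ (a : Cardinal).ord := csSup_le hne fun o ho => ho.2.le
        refine lt_of_le_of_ne hle fun heq => ?_
        refine hCA a a.2 (hCclub.2.2 (a : Cardinal).ord
          (Cardinal.ord_lt_ord.2 (hsub a a.2)) (ne_of_gt (hA a a.2).ord_pos) ?_)
        intro γ hγ
        obtain ⟨o, hos, hγo⟩ := exists_lt_of_lt_csSup hne (heq ▸ hγ)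
        exact ⟨o, hos.1, hγo, hos.2⟩
    have hc_le : ∀ (a : ↥A) (o : Ordinal), o ∈ C → o < (a : Cardinal).ord → o ≤ c a :=
      fun a o ho hlt => le_csSup (hbdd a) ⟨ho, hlt⟩
    -- enumerate S by ordinals below κ.ord
    have hmkIio : #(↥(Set.Iio κ.ord)) = Cardinal.lift.{1} κ := by
      rw [Ordinal.mk_Iio_ordinal, Cardinal.card_ord]
    have he : Nonempty (↥S ≃ ↥(Set.Iio κ.ord)) :=
      Cardinal.eq.1 (hScard.trans hmkIio.symm)
    obtain ⟨e⟩ := he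
    have hcκ : ∀ a : ↥A, c a < κ.ord :=
      fun a => (hc_lt a).trans (Cardinal.ord_lt_ord.2 (hsub a a.2))
    set val : ∀ a : ↥A, (c a).ToType → Ordinal.{0} := fun a i =>
      (e.symm ⟨((Ordinal.ToType.mk (o := c a)).symm i).1,
        Set.mem_Iio.mpr (((Ordinal.ToType.mk (o := c a)).symm i).2.trans (hcκ a))⟩ : ↥S).1 a + 1 with hval
    set f : ↥A → Ordinal.{0} := fun a => ⨆ i : (c a).ToType, val a i with hfdef
    have hf : f ∈ piSet A := by
      intro a
      apply Ordinal.iSup_lt_ord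
      · rw [Cardinal.mk_toType, (hA a a.2).cof_eq]
        exact Cardinal.lt_ord.1 (hc_lt a)
      · intro i
        have hsucc : ∀ x < (a : Cardinal).ord, x + 1 < (a : Cardinal).ord := fun x hx => by
          rw [Ordinal.add_one_eq_succ]
          exact (Cardinal.isSuccLimit_ord (hA a a.2).aleph0_le).succ_lt hx
        simp only [hval]
        have hmem : ((e.symm ⟨((Ordinal.ToType.mk (o := c a)).symm i).1,
            Set.mem_Iio.mpr (((Ordinal.ToType.mk (o := c a)).symm i).2.trans (hcκ a))⟩ : ↥S) : ↥A → Ordinal) ∈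
            piSet A := hSsub (e.symm _).2
        exact hsucc _ (hmem a)
    obtain ⟨g, hgS, hgD⟩ := hScof f hf
    set i := e ⟨g, hgS⟩ with hi
    obtain ⟨o, hoC, hio⟩ := hCclub.2.1 i.1 i.2
    have hoκ : o < κ.ord := hCclub.1 hoC
    have hmemD : {a : ↥A | f a ≤ g a} ∩ {a : ↥A | o.card < (a : Cardinal)} ∈ D :=
      Filter.inter_mem hgD (hub o.card (Cardinal.lt_ord.1 hoκ))
    obtain ⟨a, hfa, hoa⟩ := Ultrafilter.nonempty_of_mem hmemD
    have hoa' : o < (a : Cardinal).ord := Cardinal.lt_ord.2 hoa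
    have hic : i.1 < c a := hio.trans_le (hc_le a o hoC hoa')
    set j : (c a).ToType := Ordinal.ToType.mk (o := c a) ⟨i.1, hic⟩ with hj
    have hvj : val a j = g a + 1 := by
      simp only [hval]
      have h1 : (Ordinal.ToType.mk (o := c a)).symm j = ⟨i.1, hic⟩ :=
        (Ordinal.ToType.mk (o := c a)).symm_apply_apply _
      have h2 : (⟨((Ordinal.ToType.mk (o := c a)).symm j).1,
          Set.mem_Iio.mpr (((Ordinal.ToType.mk (o := c a)).symm j).2.trans (hcκ a))⟩ : ↥(Set.Iio κ.ord)) = i := by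
        apply Subtype.ext
        rw [h1]
      rw [h2, hi, e.symm_apply_apply]
    have hle : val a j ≤ f a := le_ciSup (Ordinal.bddAbove_range _) j
    rw [hvj] at hle
    have : g a + 1 ≤ g a := hle.trans hfa
    simp at this

end TukeySpec
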